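/- Define Δ(ε) = 1 − 4β²ε² − 4i(β/v)ε and let √Δ(ε) be its principal complex square root. Define the fast eigenvalue λ₂(ε) = (−1 − 2αε − √Δ(ε))/(2ε). Then, as ε → 0⁺, λ₂(ε) + 1/ε = −α + i(β/v) − β²·((1−v²)/v²)·ε − 2i(β³/v)·((1−v²)/v²)·ε² + O(ε³); that is, the function ε ↦ λ₂(ε) + 1/ε − (−α + i(β/v) − β²((1−v²)/v²)ε − 2i(β³/v)((1−v²)/v²)ε²) is O(ε³) as ε tends to 0 from the right. -/

import Mathlib

open Complex Filter Asymptotics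

set_option maxHeartbeats 1000000 in
/-- Asymptotic expansion of the fast eigenvalue
`λ₂(ε) = (−1 − 2αε − √Δ(ε))/(2ε)` of the Fourier symbol of the
semi-discretized two-velocity relaxation system, as `ε → 0⁺`:
`λ₂(ε) + 1/ε = −α + i(β/v) − β²((1−v²)/v²)ε − 2i(β³/v)((1−v²)/v²)ε² + O(ε³)`. -/
theorem fast_eigenvalue_expansion (α β v : ℝ) (hv : v ≠ 0) :
    (fun ε : ℝ =>
        ((-1 - 2 * (α : ℂ) * (ε : ℂ)
            - (1 - 4 * (β : ℂ) ^ 2 * (ε : ℂ) ^ 2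
                - 4 * Complex.I * ((β : ℂ) / (v : ℂ)) * (ε : ℂ)) ^ ((1 : ℂ) / 2))
            / (2 * (ε : ℂ))
          + 1 / (ε : ℂ)
          - (-(α : ℂ) + Complex.I * ((β : ℂ) / (v : ℂ))
              - (β : ℂ) ^ 2 * ((1 - (v : ℂ) ^ 2) / (v : ℂ) ^ 2) * (ε : ℂ)
              - 2 * Complex.I * ((β : ℂ) ^ 3 / (v : ℂ)) * ((1 - (v : ℂ) ^ 2) / (v : ℂ) ^ 2)
                  * (ε : ℂ) ^ 2)))
      =O[nhdsWithin 0 (Set.Ioi 0)] (fun ε : ℝ => ε ^ 3) := by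
  have hvC : (v : ℂ) ≠ 0 := Complex.ofReal_ne_zero.mpr hv
  set l : Filter ℝ := nhdsWithin 0 (Set.Ioi 0) with hl
  -- the discriminant
  set Δ : ℝ → ℂ := fun ε => 1 - 4 * (β : ℂ) ^ 2 * (ε : ℂ) ^ 2
      - 4 * Complex.I * ((β : ℂ) / (v : ℂ)) * (ε : ℂ) with hΔ
  -- its approximate square root (cubic Taylor polynomial)
  set S : ℝ → ℂ := fun ε => 1 - 2 * Complex.I * ((β : ℂ) / (v : ℂ)) * (ε : ℂ)
      + 2 * (β : ℂ) ^ 2 * ((1 - (v : ℂ) ^ 2) / (v : ℂ) ^ 2) * (ε : ℂ) ^ 2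
      + 4 * Complex.I * ((β : ℂ) ^ 3 / (v : ℂ)) * ((1 - (v : ℂ) ^ 2) / (v : ℂ) ^ 2)
        * (ε : ℂ) ^ 3 with hS
  -- the remainder polynomial : S² − Δ = ε⁴ · R
  set R : ℝ → ℂ := fun ε =>
      (4 * (β : ℂ) ^ 4 * (1 - (v : ℂ) ^ 2) ^ 2 / (v : ℂ) ^ 4
        + 16 * (β : ℂ) ^ 4 * (1 - (v : ℂ) ^ 2) / (v : ℂ) ^ 4)
      + 16 * Complex.I * (β : ℂ) ^ 5 * (1 - (v : ℂ) ^ 2) ^ 2 / (v : ℂ) ^ 5 * (ε : ℂ)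
      - 16 * (β : ℂ) ^ 6 * (1 - (v : ℂ) ^ 2) ^ 2 / (v : ℂ) ^ 6 * (ε : ℂ) ^ 2 with hR
  have hkey : ∀ ε : ℝ, S ε ^ 2 - Δ ε = (ε : ℂ) ^ 4 * R ε := by
    intro ε
    simp only [hS, hΔ, hR]
    field_simp
    linear_combination (16*(β:ℂ)^6*(ε:ℂ)^6 - 16*(v:ℂ)^2*(β:ℂ)^4*(ε:ℂ)^4
      - 32*(v:ℂ)^2*(β:ℂ)^6*(ε:ℂ)^6 + 4*(v:ℂ)^4*(β:ℂ)^2*(ε:ℂ)^2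
      + 16*(v:ℂ)^4*(β:ℂ)^4*(ε:ℂ)^4 + 16*(v:ℂ)^4*(β:ℂ)^6*(ε:ℂ)^6) * Complex.I_sq
  set t : ℝ → ℂ := fun ε => Δ ε ^ ((1 : ℂ) / 2) with htdef
  -- continuity facts
  have hΔcont : Tendsto Δ l (nhds 1) := by
    have : ContinuousAt Δ 0 := by fun_prop
    have h0 : Δ 0 = 1 := by simp [hΔ]
    simpa [h0] using this.tendsto.mono_left nhdsWithin_le_nhds
  have htcont : Tendsto t l (nhds 1) := by
    have := hΔcont.cpow (tendsto_const_nhds (x := (1:ℂ)/2))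
      (by simp [Complex.mem_slitPlane_iff])
    simpa [htdef, Complex.one_cpow] using this
  have hScont : Tendsto S l (nhds 1) := by
    have : ContinuousAt S 0 := by fun_prop
    have h0 : S 0 = 1 := by simp [hS]
    simpa [h0] using this.tendsto.mono_left nhdsWithin_le_nhds
  have hRcont : Tendsto R l (nhds (R 0)) := by
    have : ContinuousAt R 0 := by fun_prop
    simpa using this.tendsto.mono_left nhdsWithin_le_nhds
  have hsum : Tendsto (fun ε => S ε + t ε) l (nhds 2) := by
    have h2 : (1 : ℂ) + 1 = 2 := by norm_num
    simpa [h2] using hScont.add htcont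
  -- eventual nonvanishing
  have hΔne : ∀ᶠ ε in l, Δ ε ≠ 0 := hΔcont.eventually_ne one_ne_zero
  have hsumne : ∀ᶠ ε in l, S ε + t ε ≠ 0 := hsum.eventually_ne two_ne_zero
  have hεpos : ∀ᶠ ε in l, (0 : ℝ) < ε := eventually_mem_nhdsWithin
  -- the bounded quotient
  set G : ℝ → ℂ := fun ε => R ε / (2 * (S ε + t ε)) with hG
  have hden : Tendsto (fun ε => 2 * (S ε + t ε)) l (nhds 4) := by
    have h4 : (2 : ℂ) * 2 = 4 := by norm_num
    simpa [h4] using (tendsto_const_nhds (x := (2 : ℂ))).mul hsum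
  have hGtend : Tendsto G l (nhds (R 0 / 4)) := hRcont.div hden (by norm_num)
  have hGO : G =O[l] (fun _ => (1 : ℝ)) := hGtend.isBigO_one ℝ
  -- eventual equality of the goal with ε³ • G
  have heq : (fun ε : ℝ =>
      ((-1 - 2 * (α : ℂ) * (ε : ℂ) - t ε) / (2 * (ε : ℂ))
        + 1 / (ε : ℂ)
        - (-(α : ℂ) + Complex.I * ((β : ℂ) / (v : ℂ))
            - (β : ℂ) ^ 2 * ((1 - (v : ℂ) ^ 2) / (v : ℂ) ^ 2) * (ε : ℂ)
            - 2 * Complex.I * ((β : ℂ) ^ 3 / (v : ℂ)) * ((1 - (v : ℂ) ^ 2) / (v : ℂ) ^ 2)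
                * (ε : ℂ) ^ 2)))
      =ᶠ[l] (fun ε : ℝ => (ε : ℂ) ^ 3 * G ε) := by
    filter_upwards [hΔne, hsumne, hεpos] with ε hΔ0 hsum0 hε0
    have hεC : (ε : ℂ) ≠ 0 := Complex.ofReal_ne_zero.mpr hε0.ne'
    have ht2 : t ε ^ 2 = Δ ε := by
      rw [htdef, sq, ← Complex.cpow_add _ _ hΔ0]
      norm_num
    have hst : S ε - t ε = (ε : ℂ) ^ 4 * R ε / (S ε + t ε) := by
      rw [eq_div_iff hsum0, ← hkey ε]
      ring_nf
      linear_combination - ht2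
    have hgoal : (-1 - 2 * (α : ℂ) * (ε : ℂ) - t ε) / (2 * (ε : ℂ))
        + 1 / (ε : ℂ)
        - (-(α : ℂ) + Complex.I * ((β : ℂ) / (v : ℂ))
            - (β : ℂ) ^ 2 * ((1 - (v : ℂ) ^ 2) / (v : ℂ) ^ 2) * (ε : ℂ)
            - 2 * Complex.I * ((β : ℂ) ^ 3 / (v : ℂ)) * ((1 - (v : ℂ) ^ 2) / (v : ℂ) ^ 2)
                * (ε : ℂ) ^ 2) = (S ε - t ε) / (2 * (ε : ℂ)) := by
      simp only [hS]
      field_simp [hεC, hvC]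
      ring
    rw [hgoal, hst, hG]
    field_simp [hεC, hsum0]
  -- conclude
  have hcube : (fun ε : ℝ => (ε : ℂ) ^ 3) =O[l] (fun ε : ℝ => ε ^ 3) := by
    apply isBigO_of_le
    intro ε
    simp [norm_pow, Complex.norm_real]
  have h1 : (fun ε : ℝ => (ε : ℂ) ^ 3 * G ε) =O[l] (fun ε : ℝ => ε ^ 3) := by
    simpa using hcube.mul hGO
  exact h1.congr' heq.symm EventuallyEq.rfl
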